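/- Let c > 0 and κ ∈ ℝ, and define u : ℝ → ℝ by u(s) = c^(−1)·( √(κ² + 4c)·cosh(√c·s) + κ ). Then u(s) > 0 for all s, u(s) → +∞ as s → ±∞, and u satisfies the differential equation (u′(s))² = c·u(s)² − 2κ·u(s) − 4 for all s ∈ ℝ. -/

import Mathlib

open Real Filter

/-- Let `c > 0`, `κ ∈ ℝ` and `u(s) = c⁻¹·(√(κ² + 4c)·cosh(√c·s) + κ)`. Then `u > 0`
everywhere, `u(s) → +∞` as `s → ±∞`, and `(u′)² = c·u² − 2κ·u − 4`. -/
theorem stmt13 (c κ : ℝ) (hc : 0 < c) (u : ℝ → ℝ)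
    (hu : ∀ s : ℝ, u s = c⁻¹ * (Real.sqrt (κ ^ 2 + 4 * c) * Real.cosh (Real.sqrt c * s) + κ)) :
    (∀ s : ℝ, 0 < u s)
    ∧ Tendsto u atTop atTop
    ∧ Tendsto u atBot atTop
    ∧ ∀ s : ℝ, (deriv u s) ^ 2 = c * u s ^ 2 - 2 * κ * u s - 4 := by
  set a := Real.sqrt (κ ^ 2 + 4 * c) with ha_def
  have hpos : (0:ℝ) < κ ^ 2 + 4 * c := by positivity
  have ha2 : a ^ 2 = κ ^ 2 + 4 * c := Real.sq_sqrt hpos.le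
  have ha0 : 0 < a := Real.sqrt_pos.mpr hpos
  have hκa : -a < κ := by nlinarith [sq_nonneg (a + κ)]
  have huf : u = fun s => c⁻¹ * (a * Real.cosh (Real.sqrt c * s) + κ) := funext hu
  have hsc : 0 < Real.sqrt c := Real.sqrt_pos.mpr hc
  have hupos : ∀ s : ℝ, 0 < u s := by
    intro s
    rw [hu s]
    have h1 := Real.one_le_cosh (Real.sqrt c * s)
    have : a ≤ a * Real.cosh (Real.sqrt c * s) := by nlinarith
    have : 0 < a * Real.cosh (Real.sqrt c * s) + κ := by linarith
    positivity
  have hcosh_lb : ∀ x : ℝ, Real.exp x / 2 ≤ Real.cosh x := by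
    intro x
    rw [Real.cosh_eq]
    have := (Real.exp_pos (-x)).le
    linarith
  have hmain : ∀ (l : Filter ℝ), Tendsto (fun s => Real.sqrt c * s) l atTop →
      Tendsto u l atTop := by
    intro l hl
    have hcosh : Tendsto (fun s => Real.cosh (Real.sqrt c * s)) l atTop := by
      apply tendsto_atTop_mono (fun s => hcosh_lb (Real.sqrt c * s))
      exact (Real.tendsto_exp_atTop.comp hl).atTop_div_const two_pos
    rw [huf]
    have h1 : Tendsto (fun s => a * Real.cosh (Real.sqrt c * s) + κ) l atTop :=
      tendsto_atTop_add_const_right l κ (hcosh.const_mul_atTop ha0)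
    have h2 := h1.const_mul_atTop (inv_pos.mpr hc)
    exact h2
  have htop : Tendsto u atTop atTop :=
    hmain atTop (tendsto_id.const_mul_atTop hsc)
  have hbot : Tendsto u atBot atTop := by
    have hcosh : Tendsto (fun s => Real.cosh (Real.sqrt c * s)) atBot atTop := by
      apply tendsto_atTop_mono (fun s : ℝ => ?_)
      · exact (Real.tendsto_exp_atTop.comp
          (tendsto_neg_atBot_atTop.const_mul_atTop hsc)).atTop_div_const two_pos
      · calc Real.exp (Real.sqrt c * (-s)) / 2 = Real.exp (-(Real.sqrt c * s)) / 2 := by ring_nf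
          _ ≤ Real.cosh (-(Real.sqrt c * s)) := hcosh_lb _
          _ = Real.cosh (Real.sqrt c * s) := Real.cosh_neg _
    rw [huf]
    exact (tendsto_atTop_add_const_right _ κ (hcosh.const_mul_atTop ha0)).const_mul_atTop
      (inv_pos.mpr hc)
  refine ⟨hupos, htop, hbot, fun s => ?_⟩
  have hd : HasDerivAt u (c⁻¹ * (a * (Real.sinh (Real.sqrt c * s) * Real.sqrt c))) s := by
    rw [huf]
    have h1 : HasDerivAt (fun x : ℝ => Real.sqrt c * x) (Real.sqrt c) s := by
      simpa using (hasDerivAt_id s).const_mul (Real.sqrt c)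
    have h2 : HasDerivAt (fun x : ℝ => Real.cosh (Real.sqrt c * x))
        (Real.sinh (Real.sqrt c * s) * Real.sqrt c) s :=
      (Real.hasDerivAt_cosh _).comp s h1
    exact ((h2.const_mul a).add_const κ).const_mul c⁻¹
  rw [hd.deriv, hu s]
  have hid := Real.cosh_sq_sub_sinh_sq (Real.sqrt c * s)
  have hsc2 : Real.sqrt c ^ 2 = c := Real.sq_sqrt hc.le
  have hcne : c ≠ 0 := hc.ne'
  set X := Real.sqrt c * s with hX
  have key : (c⁻¹ * (a * (Real.sinh X * Real.sqrt c))) ^ 2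
      = c⁻¹ * (a ^ 2 * Real.sinh X ^ 2) := by
    field_simp
    linear_combination (Real.sinh X ^ 2) * hsc2
  rw [key, show Real.sinh X ^ 2 = Real.cosh X ^ 2 - 1 from by linarith]
  field_simp
  linear_combination (-1) * ha2
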